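/- For every p ∈ (1, ∞) there is a constant C_p, depending only on p, such that ‖ℳf‖_{L^p(∂T,ν)} ≤ C_p ‖f‖_{L^p(∂T,ν)} for every f ∈ L^p(∂T, ν). -/

import Mathlib

open MeasureTheory
open scoped ENNReal NNReal

/-- The punctured boundary `∂T` of the tree: maps `ω : ℤ → T` with `lev (ω j) = j`
and `par (ω j) = ω (j+1)`. -/
def PBoundary {T : Type*} (par : T → T) (lev : T → ℤ) : Type _ :=
  {ω : ℤ → T // (∀ j : ℤ, lev (ω j) = j) ∧ ∀ j : ℤ, par (ω j) = ω (j + 1)}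

/-- The boundary sector `∂T_x`. -/
def sector {T : Type*} (par : T → T) (lev : T → ℤ) (x : T) : Set (PBoundary par lev) :=
  {ω : PBoundary par lev | ω.1 (lev x) = x}

/-- The σ-algebra on `∂T` generated by the sectors. -/
instance {T : Type*} (par : T → T) (lev : T → ℤ) : MeasurableSpace (PBoundary par lev) :=
  MeasurableSpace.generateFrom (Set.range (sector par lev))

/-- The flow measure `m_ν x = ν (∂T_x)` (as a real number). -/
noncomputable def mnu {T : Type*} (par : T → T) (lev : T → ℤ)
    (ν : Measure (PBoundary par lev)) (x : T) : ℝ :=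
  (ν (sector par lev x)).toReal

/-- The Hardy–Littlewood maximal operator associated with `ν`. -/
noncomputable def maximal {T : Type*} (par : T → T) (lev : T → ℤ)
    (ν : Measure (PBoundary par lev)) (f : PBoundary par lev → ℝ)
    (ω : PBoundary par lev) : ℝ≥0∞ :=
  ⨆ x : {x : T // ω.1 (lev x) = x},
    (ν (sector par lev x.1))⁻¹ * ∫⁻ ξ in sector par lev x.1, ENNReal.ofReal |f ξ| ∂ν

section Tree
variable {T : Type*} {par : T → T} {lev : T → ℤ}
variable {T : Type*} {par : T → T} {lev : T → ℤ}

lemma pb_iter (ω : PBoundary par lev) (j : ℤ) (n : ℕ) : ω.1 (j + n) = par^[n] (ω.1 j) := by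
  induction n with
  | zero => simp
  | succ n ih =>
      have h2 := ω.2.2 (j + n)
      have : (j + (n+1 : ℕ) : ℤ) = (j + n) + 1 := by push_cast; ring
      rw [this, ← h2, ih, Function.iterate_succ_apply']

lemma lev_iter (hlev : ∀ x, lev (par x) = lev x + 1) (x : T) (n : ℕ) :
    lev (par^[n] x) = lev x + n := by
  induction n with
  | zero => simp
  | succ n ih => rw [Function.iterate_succ_apply', hlev, ih]; push_cast; ring

lemma sector_sub (hlev : ∀ x, lev (par x) = lev x + 1) (x : T) (n : ℕ) :
    sector par lev x ⊆ sector par lev (par^[n] x) := by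
  intro ω hω
  have : ω.1 (lev x + n) = par^[n] (ω.1 (lev x)) := pb_iter ω (lev x) n
  simp only [sector, Set.mem_setOf_eq] at hω ⊢
  rw [lev_iter hlev, this, hω]

lemma eq_iter_of_mem_sectors (hlev : ∀ x, lev (par x) = lev x + 1) {x y : T}
    {ω : PBoundary par lev} (hx : ω ∈ sector par lev x) (hy : ω ∈ sector par lev y)
    {n : ℕ} (hn : lev x + n = lev y) : par^[n] x = y := by
  simp only [sector, Set.mem_setOf_eq] at hx hy
  rw [← hx, ← pb_iter ω (lev x) n, hn, hy]

lemma iter_fiber_finite (hfin : ∀ x : T, {y : T | par y = x}.Finite) (m : ℕ) (z : T) :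
    {y : T | par^[m] y = z}.Finite := by
  induction m generalizing z with
  | zero => simpa using Set.finite_singleton z
  | succ m ih =>
      have : {y : T | par^[m+1] y = z} = ⋃ c ∈ {c : T | par^[m] c = z}, {y : T | par y = c} := by
        ext y
        simp only [Set.mem_setOf_eq, Set.mem_iUnion, exists_prop, Function.iterate_succ_apply]
        constructor
        · intro h; exact ⟨par y, h, rfl⟩
        · rintro ⟨c, hc, rfl⟩; exact hc
      rw [this]
      exact Set.Finite.biUnion (ih z) (fun c _ => hfin c)

lemma countable_of_tree (hfin : ∀ x : T, {y : T | par y = x}.Finite)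
    (hconn : ∀ x y : T, ∃ n m : ℕ, par^[n] x = par^[m] y) (x0 : T) : Countable T := by
  rw [← Set.countable_univ_iff]
  have : (Set.univ : Set T) = ⋃ m : ℕ, ⋃ n : ℕ, {y : T | par^[n] y = par^[m] x0} := by
    ext y
    simp only [Set.mem_univ, Set.mem_iUnion, Set.mem_setOf_eq, true_iff]
    obtain ⟨n, m, h⟩ := hconn y x0
    exact ⟨m, n, h⟩
  rw [this]
  exact Set.countable_iUnion fun m => Set.countable_iUnion fun n =>
    (iter_fiber_finite hfin n (par^[m] x0)).countable

lemma measurableSet_sector (x : T) : MeasurableSet (sector par lev x) :=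
  MeasurableSpace.measurableSet_generateFrom ⟨x, rfl⟩

lemma iUnion_sector_eq_univ (hlev : ∀ x, lev (par x) = lev x + 1)
    (hconn : ∀ x y : T, ∃ n m : ℕ, par^[n] x = par^[m] y) (x : T) :
    ⋃ n : ℕ, sector par lev (par^[n] x) = Set.univ := by
  ext ω
  simp only [Set.mem_iUnion, Set.mem_univ, iff_true]
  obtain ⟨n, m, h⟩ := hconn x (ω.1 0)
  refine ⟨n, ?_⟩
  show ω.1 (lev (par^[n] x)) = par^[n] x
  rw [h, lev_iter hlev, ω.2.1 0]
  have := pb_iter ω 0 m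
  rw [zero_add] at this ⊢
  exact this

variable (par lev) in
noncomputable def avgE (ν : Measure (PBoundary par lev)) (h : PBoundary par lev → ℝ≥0∞)
    (x : T) : ℝ≥0∞ :=
  (ν (sector par lev x))⁻¹ * ∫⁻ ξ in sector par lev x, h ξ ∂ν

variable (par lev) in
noncomputable def maxE (ν : Measure (PBoundary par lev)) (h : PBoundary par lev → ℝ≥0∞)
    (ω : PBoundary par lev) : ℝ≥0∞ :=
  ⨆ x : {x : T // ω.1 (lev x) = x}, avgE par lev ν h x.1

lemma maximal_eq_maxE (ν : Measure (PBoundary par lev)) (f : PBoundary par lev → ℝ) :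
    maximal par lev ν f = maxE par lev ν (fun ξ => ENNReal.ofReal |f ξ|) := rfl

lemma maxE_eq_iSup (ν : Measure (PBoundary par lev)) (h : PBoundary par lev → ℝ≥0∞)
    (ω : PBoundary par lev) :
    maxE par lev ν h ω
      = ⨆ x : T, (sector par lev x).indicator (fun _ => avgE par lev ν h x) ω := by
  apply le_antisymm
  · refine iSup_le fun x => ?_
    refine le_iSup_of_le x.1 ?_
    rw [Set.indicator_of_mem (show ω ∈ sector par lev x.1 from x.2)]
  · refine iSup_le fun x => ?_
    by_cases hx : ω ∈ sector par lev x
    · rw [Set.indicator_of_mem hx]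
      exact le_iSup (fun y : {x : T // ω.1 (lev x) = x} => avgE par lev ν h y.1) ⟨x, hx⟩
    · rw [Set.indicator_of_notMem hx]
      exact zero_le

lemma measurable_maxE [Countable T] (ν : Measure (PBoundary par lev))
    (h : PBoundary par lev → ℝ≥0∞) : Measurable (maxE par lev ν h) := by
  have : maxE par lev ν h
      = fun ω => ⨆ x : T, (sector par lev x).indicator (fun _ => avgE par lev ν h x) ω :=
    funext (maxE_eq_iSup ν h)
  rw [this]
  exact Measurable.iSup fun x => Measurable.indicator measurable_const (measurableSet_sector x)

lemma mem_sector_iff (ω : PBoundary par lev) (x : T) :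
    ω ∈ sector par lev x ↔ ω.1 (lev x) = x := Iff.rfl

/-- the basic estimate on a sector with large average -/
lemma sector_meas_le (ν : Measure (PBoundary par lev))
    (hν : ∀ x : T, 0 < ν (sector par lev x) ∧ ν (sector par lev x) < ⊤)
    (h : PBoundary par lev → ℝ≥0∞) {l : ℝ≥0∞} (hl0 : l ≠ 0) (hltop : l ≠ ⊤) {x : T}
    (hx : l < avgE par lev ν h x) :
    ν (sector par lev x) ≤ l⁻¹ * ∫⁻ ξ in sector par lev x, h ξ ∂ν := by
  set S := sector par lev x
  have h0 : ν S ≠ 0 := (hν x).1.ne'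
  have htop : ν S ≠ ⊤ := (hν x).2.ne
  have key : l * ν S ≤ ∫⁻ ξ in S, h ξ ∂ν := by
    calc l * ν S ≤ ((ν S)⁻¹ * ∫⁻ ξ in S, h ξ ∂ν) * ν S :=
          mul_le_mul_left hx.le _
      _ = (ν S)⁻¹ * ν S * ∫⁻ ξ in S, h ξ ∂ν := by ring
      _ = ∫⁻ ξ in S, h ξ ∂ν := by rw [ENNReal.inv_mul_cancel h0 htop, one_mul]
  calc ν S = l⁻¹ * (l * ν S) := by
        rw [← mul_assoc, ENNReal.inv_mul_cancel hl0 hltop, one_mul]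
    _ ≤ l⁻¹ * ∫⁻ ξ in S, h ξ ∂ν := mul_le_mul_right key _

/-- The weak-type (1,1) inequality with constant 1. -/
lemma weak_type [Countable T] (hlev : ∀ x, lev (par x) = lev x + 1)
    (hconn : ∀ x y : T, ∃ n m : ℕ, par^[n] x = par^[m] y)
    (ν : Measure (PBoundary par lev))
    (hν : ∀ x : T, 0 < ν (sector par lev x) ∧ ν (sector par lev x) < ⊤)
    (h : PBoundary par lev → ℝ≥0∞) {l : ℝ≥0∞} (hl0 : l ≠ 0) (hltop : l ≠ ⊤) :
    ν {ω | l < maxE par lev ν h ω} ≤ l⁻¹ * ∫⁻ ω, h ω ∂ν := by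
  set A := avgE par lev ν h with hA
  by_cases hcase : ∃ x : T, ∀ n : ℕ, ∃ m : ℕ, n ≤ m ∧ l < A (par^[m] x)
  · -- unbounded chain: the whole space has small measure
    obtain ⟨x, hx⟩ := hcase
    have hmono : Monotone fun n : ℕ => sector par lev (par^[n] x) := by
      intro a b hab
      show sector par lev (par^[a] x) ⊆ sector par lev (par^[b] x)
      have : par^[b] x = par^[b - a] (par^[a] x) := by
        rw [← Function.iterate_add_apply, Nat.sub_add_cancel hab]
      rw [this]
      exact sector_sub hlev _ _
    calc ν {ω | l < maxE par lev ν h ω} ≤ ν Set.univ := measure_mono (Set.subset_univ _)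
      _ = ν (⋃ n : ℕ, sector par lev (par^[n] x)) := by rw [iUnion_sector_eq_univ hlev hconn]
      _ = ⨆ n : ℕ, ν (sector par lev (par^[n] x)) :=
          (hmono.directed_le).measure_iUnion
      _ ≤ l⁻¹ * ∫⁻ ω, h ω ∂ν := by
          refine iSup_le fun n => ?_
          obtain ⟨m, hnm, hm⟩ := hx n
          calc ν (sector par lev (par^[n] x)) ≤ ν (sector par lev (par^[m] x)) :=
                measure_mono (hmono hnm)
            _ ≤ l⁻¹ * ∫⁻ ξ in sector par lev (par^[m] x), h ξ ∂ν :=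
                sector_meas_le ν hν h hl0 hltop hm
            _ ≤ l⁻¹ * ∫⁻ ω, h ω ∂ν :=
                mul_le_mul_right (setLIntegral_le_lintegral _ _) _
  · push_neg at hcase
    -- S : set of maximal nodes with large average
    set S : Set T := {x | l < A x ∧ ∀ n : ℕ, 1 ≤ n → ¬ l < A (par^[n] x)} with hS
    have hcover : {ω | l < maxE par lev ν h ω} ⊆ ⋃ x ∈ S, sector par lev x := by
      intro ω hω
      simp only [Set.mem_setOf_eq, maxE, lt_iSup_iff] at hω
      obtain ⟨⟨x0, hx0⟩, hlt⟩ := hω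
      -- the set of levels j with large average at ω j is nonempty and bounded above
      set P : ℤ → Prop := fun j => l < A (ω.1 j) with hP
      have hP0 : P (lev x0) := by show l < A (ω.1 (lev x0)); rw [hx0]; exact hlt
      obtain ⟨N, hN⟩ := hcase x0
      have hbdd : ∀ j : ℤ, P j → j ≤ lev x0 + N := by
        intro j hj
        by_contra hcon
        push_neg at hcon
        obtain ⟨n, hn⟩ : ∃ n : ℕ, j = lev x0 + n := ⟨(j - lev x0).toNat, by omega⟩
        subst hn
        have heq : ω.1 (lev x0 + n) = par^[n] x0 := by rw [pb_iter, hx0]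
        have hge : N ≤ n := by omega
        have hj' : l < A (par^[n] x0) := by rw [← heq]; exact hj
        exact absurd hj' (not_lt.mpr (hN _ hge))
      obtain ⟨jm, hjm, hjmax⟩ := Int.exists_greatest_of_bdd ⟨lev x0 + N, hbdd⟩ ⟨lev x0, hP0⟩
      refine Set.mem_biUnion (show ω.1 jm ∈ S from ?_) ?_
      · constructor
        · exact hjm
        · intro n hn hcon
          have hlev' : lev (ω.1 jm) = jm := ω.2.1 jm
          have : par^[n] (ω.1 jm) = ω.1 (jm + n) := (pb_iter ω jm n).symm
          rw [this] at hcon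
          have := hjmax _ hcon
          omega
      · show ω.1 (lev (ω.1 jm)) = ω.1 jm
        rw [ω.2.1 jm]
    -- sectors over S are pairwise disjoint
    have hdisj : (S : Set T).PairwiseDisjoint (sector par lev) := by
      intro x hx y hy hxy
      rw [Function.onFun, Set.disjoint_left]
      intro ω hωx hωy
      rcases le_total (lev x) (lev y) with hle | hle
      · have hn : lev x + (lev y - lev x).toNat = lev y := by
          rw [Int.toNat_of_nonneg (by omega)]; ring
        have heq := eq_iter_of_mem_sectors hlev hωx hωy hn
        rcases Nat.eq_zero_or_pos (lev y - lev x).toNat with h0 | hpos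
        · rw [h0] at heq; simp only [Function.iterate_zero, id_eq] at heq; exact hxy heq
        · exact hx.2 _ hpos (by rw [heq]; exact hy.1)
      · have hn : lev y + (lev x - lev y).toNat = lev x := by
          rw [Int.toNat_of_nonneg (by omega)]; ring
        have heq := eq_iter_of_mem_sectors hlev hωy hωx hn
        rcases Nat.eq_zero_or_pos (lev x - lev y).toNat with h0 | hpos
        · rw [h0] at heq; simp only [Function.iterate_zero, id_eq] at heq; exact hxy heq.symm
        · exact hy.2 _ hpos (by rw [heq]; exact hx.1)
    calc ν {ω | l < maxE par lev ν h ω} ≤ ν (⋃ x ∈ S, sector par lev x) :=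
          measure_mono hcover
      _ = ν (⋃ x : S, sector par lev x.1) := by rw [Set.biUnion_eq_iUnion]
      _ ≤ ∑' x : S, ν (sector par lev x.1) := measure_iUnion_le _
      _ ≤ ∑' x : S, l⁻¹ * ∫⁻ ξ in sector par lev x.1, h ξ ∂ν :=
          ENNReal.tsum_le_tsum fun x => sector_meas_le ν hν h hl0 hltop x.2.1
      _ = l⁻¹ * ∑' x : S, ∫⁻ ξ in sector par lev x.1, h ξ ∂ν := ENNReal.tsum_mul_left
      _ = l⁻¹ * ∫⁻ ξ in ⋃ x : S, sector par lev x.1, h ξ ∂ν := by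
          rw [lintegral_iUnion (fun x => measurableSet_sector x.1)
            (fun x y hxy => hdisj x.2 y.2 (fun hc => hxy (Subtype.ext hc)))]
      _ ≤ l⁻¹ * ∫⁻ ω, h ω ∂ν := mul_le_mul_right (setLIntegral_le_lintegral _ _) _

end Tree

section Helpers


lemma two_zpow_ne_zero (a : ℤ) : ((2:ℝ≥0∞)^a) ≠ 0 :=
  (ENNReal.zpow_pos (by norm_num) (by norm_num) a).ne'

lemma two_zpow_ne_top (a : ℤ) : ((2:ℝ≥0∞)^a) ≠ ⊤ :=
  (ENNReal.zpow_lt_top (by norm_num) (by norm_num) a).ne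

lemma zpow_rpow_comm (n : ℤ) (s : ℝ) : ((2:ℝ≥0∞)^n)^s = ((2:ℝ≥0∞)^s)^n := by
  rw [← ENNReal.rpow_intCast 2 n, ← ENNReal.rpow_mul, ← ENNReal.rpow_intCast ((2:ℝ≥0∞)^s) n,
    ← ENNReal.rpow_mul, mul_comm]

/-- geometric tail sum over integers -/
lemma geom_tail {r : ℝ≥0∞} (hr0 : r ≠ 0) (hrtop : r ≠ ⊤) (L : ℤ) :
    ∑' j : ℤ, (if j ≤ L then r^j else 0) = r^L * (1 - r⁻¹)⁻¹ := by
  have hinj : Function.Injective (fun n : ℕ => L - (n:ℤ)) := by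
    intro a b hab; simpa using hab
  have hsupp : Function.support (fun j : ℤ => if j ≤ L then r^j else 0)
      ⊆ Set.range (fun n : ℕ => L - (n:ℤ)) := by
    intro j hj
    by_cases hjL : j ≤ L
    · exact ⟨(L - j).toNat, by simp; omega⟩
    · simp only [Function.mem_support, if_neg hjL, ne_eq, not_true_eq_false] at hj
  rw [← Function.Injective.tsum_eq hinj hsupp]
  have : ∀ n : ℕ, (if L - (n:ℤ) ≤ L then r^(L - (n:ℤ)) else 0) = r^L * (r⁻¹)^n := by
    intro n
    rw [if_pos (by omega)]
    rw [ENNReal.zpow_sub hr0 hrtop, zpow_natCast, ← ENNReal.inv_pow]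
  simp only [this]
  rw [ENNReal.tsum_mul_left, ENNReal.tsum_geometric]

lemma geom_tail_le {r : ℝ≥0∞} (hr0 : r ≠ 0) (hrtop : r ≠ ⊤) (L : ℤ)
    (F : ℤ → ℝ≥0∞) (hF : ∀ j, F j ≤ (if j ≤ L then r^j else 0)) :
    ∑' j : ℤ, F j ≤ r^L * (1 - r⁻¹)⁻¹ := by
  rw [← geom_tail hr0 hrtop L]
  exact ENNReal.tsum_le_tsum hF


lemma two_zpow_lt {a b : ℤ} (hab : a < b) : ((2:ℝ≥0∞)^a) < 2^b := by
  have h1 : (2:ℝ≥0∞)^b = 2^a * 2^(b-a) := by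
    rw [← ENNReal.zpow_add (by norm_num) (by norm_num)]; ring_nf
  have h2 : (2:ℝ≥0∞)^(1:ℤ) ≤ 2^(b-a) := ENNReal.zpow_le_of_le one_le_two (by omega)
  have h3 : (2:ℝ≥0∞)^a * 2^(1:ℤ) ≤ 2^a * 2^(b-a) := mul_le_mul_right h2 _
  calc (2:ℝ≥0∞)^a < 2^a + 2^a :=
        ENNReal.lt_add_right (two_zpow_ne_top a) (two_zpow_ne_zero a)
    _ = 2^a * 2^(1:ℤ) := by rw [zpow_one, mul_two]
    _ ≤ 2^a * 2^(b-a) := h3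
    _ = 2^b := h1.symm

end Helpers

universe u


/-- For every `p ∈ (1,∞)` there is a constant `C_p` depending only on `p`
such that `‖ℳ f‖_{L^p(ν)} ≤ C_p ‖f‖_{L^p(ν)}` for every `f ∈ L^p(∂T, ν)`. -/
theorem stmt1 (p : ℝ) (hp : 1 < p) :
    ∃ C : ℝ, 0 < C ∧
      ∀ (T : Type u) (par : T → T) (lev : T → ℤ),
        Nonempty T →
        (∀ x : T, lev (par x) = lev x + 1) →
        (∀ x : T, {y : T | par y = x}.Finite) →
        (∀ x : T, ∃ y : T, par y = x) →
        (∀ x y : T, ∃ n m : ℕ, par^[n] x = par^[m] y) →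
        ∀ ν : Measure (PBoundary par lev),
          (∀ x : T, 0 < ν (sector par lev x) ∧ ν (sector par lev x) < ⊤) →
          ∀ f : PBoundary par lev → ℝ, MemLp f (ENNReal.ofReal p) ν →
            ∫⁻ ω, maximal par lev ν f ω ^ p ∂ν
              ≤ ENNReal.ofReal C ^ p * ∫⁻ ω, ENNReal.ofReal |f ω| ^ p ∂ν := by
  classical
  have hp0 : (0:ℝ) < p := lt_trans one_pos hp
  have hp1 : (0:ℝ) < p - 1 := by linarith
  -- the constant
  set r : ℝ≥0∞ := (2:ℝ≥0∞) ^ (p - 1) with hr_def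
  have h2top : (2:ℝ≥0∞) ≠ ⊤ := by norm_num
  have h20 : (2:ℝ≥0∞) ≠ 0 := by norm_num
  have hr1 : 1 < r := by
    have := ENNReal.rpow_lt_rpow_of_exponent_lt (x := 2) ENNReal.one_lt_two h2top hp1
    rwa [ENNReal.rpow_zero] at this
  have hr0 : r ≠ 0 := (lt_trans zero_lt_one hr1).ne'
  have hrtop : r ≠ ⊤ := ENNReal.rpow_lt_top_of_nonneg (by linarith) h2top |>.ne
  have hrinv : r⁻¹ < 1 := ENNReal.inv_lt_one.mpr hr1
  have hsub0 : (1 - r⁻¹ : ℝ≥0∞) ≠ 0 := by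
    have : (0:ℝ≥0∞) < 1 - r⁻¹ := tsub_pos_of_lt hrinv
    exact this.ne'
  have hsubtop : ((1 - r⁻¹ : ℝ≥0∞))⁻¹ ≠ ⊤ := ENNReal.inv_ne_top.mpr hsub0
  have h2p0 : ((2:ℝ≥0∞)^p) ≠ 0 := (ENNReal.rpow_pos two_pos h2top).ne'
  have h2ptop : ((2:ℝ≥0∞)^p) ≠ ⊤ := (ENNReal.rpow_lt_top_of_nonneg hp0.le h2top).ne
  set K : ℝ≥0∞ := ((2:ℝ≥0∞)^p)^(3:ℤ) * (1 - r⁻¹)⁻¹ with hK_def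
  have hK0 : K ≠ 0 := by
    apply mul_ne_zero
    · exact (ENNReal.zpow_pos h2p0 h2ptop 3).ne'
    · simp only [ne_eq, ENNReal.inv_eq_zero]
      exact (lt_of_le_of_lt tsub_le_self ENNReal.one_lt_top).ne
  have hKtop : K ≠ ⊤ := ENNReal.mul_ne_top (ENNReal.zpow_lt_top h2p0 h2ptop 3).ne hsubtop
  refine ⟨(K ^ p⁻¹).toReal + 1, by positivity, ?_⟩
  have hCK : K ≤ ENNReal.ofReal ((K ^ p⁻¹).toReal + 1) ^ p := by
    have h1 : K ^ p⁻¹ ≠ ⊤ := (ENNReal.rpow_lt_top_of_nonneg (by positivity) hKtop).ne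
    have h2 : K ^ p⁻¹ ≤ ENNReal.ofReal ((K ^ p⁻¹).toReal + 1) :=
      le_trans (le_of_eq (ENNReal.ofReal_toReal h1).symm)
        (ENNReal.ofReal_le_ofReal (by linarith))
    calc K = (K ^ p⁻¹) ^ p := by
          rw [← ENNReal.rpow_mul, inv_mul_cancel₀ hp0.ne', ENNReal.rpow_one]
      _ ≤ ENNReal.ofReal ((K ^ p⁻¹).toReal + 1) ^ p := ENNReal.rpow_le_rpow h2 hp0.le
  intro T par lev hne hlev hfin _hsucc hconn ν hν f hf
  haveI : Countable T := countable_of_tree hfin hconn (Classical.choice hne)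
  -- replace f by a measurable representative
  have hfm := hf.aestronglyMeasurable
  set g : PBoundary par lev → ℝ := hfm.mk f with hg_def
  have hgm : Measurable g := hfm.stronglyMeasurable_mk.measurable
  have hfg : f =ᵐ[ν] g := hfm.ae_eq_mk
  set h : PBoundary par lev → ℝ≥0∞ := fun ω => ENNReal.ofReal |g ω| with hh_def
  have hh : Measurable h := ENNReal.measurable_ofReal.comp hgm.abs
  have hhtop : ∀ ω, h ω ≠ ⊤ := fun ω => ENNReal.ofReal_ne_top
  have hmax : maximal par lev ν f = maxE par lev ν h := by
    rw [maximal_eq_maxE]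
    funext ω
    refine iSup_congr fun x => ?_
    unfold avgE
    congr 1
    refine lintegral_congr_ae (ae_restrict_of_ae ?_)
    exact hfg.mono fun ξ hξ => by show ENNReal.ofReal |f ξ| = ENNReal.ofReal |g ξ|; rw [hξ]
  have hRHS : ∫⁻ ω, ENNReal.ofReal |f ω| ^ p ∂ν = ∫⁻ ω, h ω ^ p ∂ν :=
    lintegral_congr_ae (hfg.mono fun ω hω => by
      show ENNReal.ofReal |f ω| ^ p = ENNReal.ofReal |g ω| ^ p; rw [hω])
  rw [hmax, hRHS]
  set D : ℝ≥0∞ := ∫⁻ ω, h ω ^ p ∂ν with hD_def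
  set M : PBoundary par lev → ℝ≥0∞ := maxE par lev ν h with hM_def
  have hMm : Measurable M := measurable_maxE ν h
  suffices hmain : ∫⁻ ω, M ω ^ p ∂ν ≤ K * D by
    exact hmain.trans (mul_le_mul_left hCK D)
  by_cases hD : D = ⊤
  · rw [hD, ENNReal.mul_top hK0]; exact le_top
  -- truncation of h at level 2^k
  set tr : ℤ → PBoundary par lev → ℝ≥0∞ :=
    fun k ω => if (2:ℝ≥0∞)^k < h ω then h ω else 0 with htr_def
  have htrm : ∀ k, Measurable (tr k) :=
    fun k => Measurable.ite (measurableSet_lt measurable_const hh) hh measurable_const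
  -- the weak-type estimate at dyadic levels, with truncation
  have hweak : ∀ k : ℤ, ν {ω | (2:ℝ≥0∞)^(k+1) < M ω}
      ≤ ((2:ℝ≥0∞)^k)⁻¹ * ∫⁻ ω, tr k ω ∂ν := by
    intro k
    set c : ℝ≥0∞ := (2:ℝ≥0∞)^k with hc_def
    have hpt : ∀ ω, h ω ≤ tr k ω + c := by
      intro ω
      by_cases hc : c < h ω
      · rw [htr_def]; dsimp only; rw [if_pos hc]; exact le_self_add
      · rw [htr_def]; dsimp only; rw [if_neg hc]; rw [zero_add]; exact not_lt.mp hc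
    have hmax_le : ∀ ω, M ω ≤ maxE par lev ν (tr k) ω + c := by
      intro ω
      refine iSup_le fun x => ?_
      have havg : avgE par lev ν h x.1 ≤ avgE par lev ν (tr k) x.1 + c := by
        unfold avgE
        set S := sector par lev x.1
        have h0 : ν S ≠ 0 := (hν x.1).1.ne'
        have htop' : ν S ≠ ⊤ := (hν x.1).2.ne
        have h1 : ∫⁻ ξ in S, h ξ ∂ν ≤ (∫⁻ ξ in S, tr k ξ ∂ν) + c * ν S := by
          calc ∫⁻ ξ in S, h ξ ∂ν ≤ ∫⁻ ξ in S, (tr k ξ + c) ∂ν := lintegral_mono hpt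
            _ = (∫⁻ ξ in S, tr k ξ ∂ν) + c * ν S := by
                rw [lintegral_add_right _ measurable_const, setLIntegral_const]
        calc (ν S)⁻¹ * ∫⁻ ξ in S, h ξ ∂ν
            ≤ (ν S)⁻¹ * ((∫⁻ ξ in S, tr k ξ ∂ν) + c * ν S) := mul_le_mul_right h1 _
          _ = (ν S)⁻¹ * (∫⁻ ξ in S, tr k ξ ∂ν) + (ν S)⁻¹ * ν S * c := by ring
          _ = (ν S)⁻¹ * (∫⁻ ξ in S, tr k ξ ∂ν) + c := by
              rw [ENNReal.inv_mul_cancel h0 htop', one_mul]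
      refine havg.trans (add_le_add_left ?_ c)
      exact le_iSup (fun y : {x : T // ω.1 (lev x) = x} => avgE par lev ν (tr k) y.1) x
    have hsub : {ω | (2:ℝ≥0∞)^(k+1) < M ω} ⊆ {ω | c < maxE par lev ν (tr k) ω} := by
      intro ω hω
      simp only [Set.mem_setOf_eq] at hω ⊢
      have h2 : (2:ℝ≥0∞)^(k+1) = c + c := by
        rw [hc_def, ENNReal.zpow_add h20 h2top k 1, zpow_one, mul_two]
      rw [h2] at hω
      have h3 : c + c < maxE par lev ν (tr k) ω + c := lt_of_lt_of_le hω (hmax_le ω)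
      exact (ENNReal.add_lt_add_iff_right (two_zpow_ne_top k)).mp h3
    calc ν {ω | (2:ℝ≥0∞)^(k+1) < M ω} ≤ ν {ω | c < maxE par lev ν (tr k) ω} :=
          measure_mono hsub
      _ ≤ c⁻¹ * ∫⁻ ω, tr k ω ∂ν :=
          weak_type hlev hconn ν hν (tr k) (two_zpow_ne_zero k) (two_zpow_ne_top k)
  -- truncation is controlled by the p-th power
  have htrunc_le : ∀ (k : ℤ) (ω), tr k ω ≤ ((2:ℝ≥0∞)^k)^(1-p) * h ω ^ p := by
    intro k ω
    by_cases hc : (2:ℝ≥0∞)^k < h ω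
    · rw [htr_def]; dsimp only; rw [if_pos hc]
      have h0 : h ω ≠ 0 := (lt_of_le_of_lt (zero_le) hc).ne'
      have heq : h ω = h ω ^ (1-p) * h ω ^ p := by
        rw [← ENNReal.rpow_add _ _ h0 (hhtop ω)]
        norm_num
      nth_rewrite 1 [heq]
      have hle : h ω ^ (1-p) ≤ ((2:ℝ≥0∞)^k) ^ (1-p) := by
        have e1 : h ω ^ (1-p) = (h ω ^ (p-1))⁻¹ := by
          rw [← ENNReal.rpow_neg]; norm_num
        have e2 : ((2:ℝ≥0∞)^k) ^ (1-p) = (((2:ℝ≥0∞)^k) ^ (p-1))⁻¹ := by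
          rw [← ENNReal.rpow_neg]; norm_num
        rw [e1, e2]
        exact ENNReal.inv_le_inv.mpr (ENNReal.rpow_le_rpow hc.le hp1.le)
      exact mul_le_mul_left hle _
    · rw [htr_def]; dsimp only; rw [if_neg hc]; exact zero_le
  -- the maximal function is a.e. finite
  have hinfty : ν {ω | M ω = ⊤} = 0 := by
    set ρ : ℝ≥0∞ := ((2:ℝ≥0∞)^p)⁻¹ with hρ_def
    have hρ1 : ρ < 1 := by
      rw [hρ_def, ENNReal.inv_lt_one]
      calc (1:ℝ≥0∞) = 2^(0:ℝ) := by rw [ENNReal.rpow_zero]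
        _ < 2^p := ENNReal.rpow_lt_rpow_of_exponent_lt ENNReal.one_lt_two h2top hp0
    have hbound : ∀ n : ℕ, ν {ω | M ω = ⊤} ≤ ρ^n * D := by
      intro n
      have h1 : {ω | M ω = ⊤} ⊆ {ω | (2:ℝ≥0∞)^((n:ℤ)+1) < M ω} := by
        intro ω hω
        simp only [Set.mem_setOf_eq] at hω ⊢
        rw [hω]
        exact (ENNReal.zpow_lt_top h20 h2top _)
      have h2 : ∫⁻ ω, tr n ω ∂ν ≤ ((2:ℝ≥0∞)^(n:ℤ))^(1-p) * D := by
        calc ∫⁻ ω, tr n ω ∂ν ≤ ∫⁻ ω, ((2:ℝ≥0∞)^(n:ℤ))^(1-p) * h ω ^ p ∂ν :=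
              lintegral_mono (htrunc_le n)
          _ = ((2:ℝ≥0∞)^(n:ℤ))^(1-p) * D := lintegral_const_mul _ (hh.pow_const p)
      have h3 : ((2:ℝ≥0∞)^(n:ℤ))⁻¹ * (((2:ℝ≥0∞)^(n:ℤ))^(1-p) * D) = ρ^n * D := by
        rw [← mul_assoc]
        congr 1
        have e1 : ((2:ℝ≥0∞)^(n:ℤ))⁻¹ = ((2:ℝ≥0∞)^(n:ℤ))^(-1:ℝ) :=
          (ENNReal.rpow_neg_one _).symm
        rw [e1, ← ENNReal.rpow_add _ _ (two_zpow_ne_zero n) (two_zpow_ne_top n)]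
        have e2 : (-1 + (1-p)) = -p := by ring
        rw [e2, ENNReal.rpow_neg, zpow_rpow_comm, zpow_natCast, ENNReal.inv_pow]
      calc ν {ω | M ω = ⊤} ≤ ν {ω | (2:ℝ≥0∞)^((n:ℤ)+1) < M ω} := measure_mono h1
        _ ≤ ((2:ℝ≥0∞)^(n:ℤ))⁻¹ * ∫⁻ ω, tr n ω ∂ν := hweak n
        _ ≤ ((2:ℝ≥0∞)^(n:ℤ))⁻¹ * (((2:ℝ≥0∞)^(n:ℤ))^(1-p) * D) := mul_le_mul_right h2 _
        _ = ρ^n * D := h3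
    have htends : Filter.Tendsto (fun n : ℕ => ρ^n * D) Filter.atTop (nhds 0) := by
      have := ENNReal.Tendsto.mul_const
        (ENNReal.tendsto_pow_atTop_nhds_zero_of_lt_one hρ1) (Or.inr hD)
      rwa [zero_mul] at this
    exact le_antisymm (ge_of_tendsto' htends hbound) (zero_le)
  -- decomposition into dyadic bands
  set A : ℤ → Set (PBoundary par lev) :=
    fun k => {ω | (2:ℝ≥0∞)^(k+2) ≤ M ω ∧ M ω < 2^(k+3)} with hA_def
  have hAm : ∀ k, MeasurableSet (A k) := by
    intro k
    have he : A k = {ω | (2:ℝ≥0∞)^(k+2) ≤ M ω} ∩ {ω | (2:ℝ≥0∞)^(k+3) ≤ M ω}ᶜ := by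
      ext ω
      simp only [hA_def, Set.mem_setOf_eq, Set.mem_inter_iff, Set.mem_compl_iff, not_le]
    rw [he]
    exact (measurableSet_le measurable_const hMm).inter
      (measurableSet_le measurable_const hMm).compl
  have hSinf : MeasurableSet {ω | M ω = ⊤} := by
    have huniv : {ω | M ω = ⊤} = {ω | ⊤ ≤ M ω} := by
      ext ω; simp [top_le_iff]
    rw [huniv]
    exact measurableSet_le measurable_const hMm
  have hptws : ∀ ω, M ω ^ p ≤ ({ω | M ω = ⊤}.indicator (fun ω => M ω ^ p) ω)
      + ∑' k : ℤ, (A k).indicator (fun ω => M ω ^ p) ω := by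
    intro ω
    rcases eq_or_ne (M ω) ⊤ with h1 | h1
    · rw [Set.indicator_of_mem (show ω ∈ {ω | M ω = ⊤} from h1)]
      exact le_self_add
    rcases eq_or_ne (M ω) 0 with h0 | h0
    · rw [h0, ENNReal.zero_rpow_of_pos hp0]; exact zero_le
    obtain ⟨L, hL1, hL2⟩ := ENNReal.exists_mem_Ico_zpow h0 h1 ENNReal.one_lt_two h2top
    have hmem : ω ∈ A (L-2) := by
      constructor
      · have e : L - 2 + 2 = L := by ring
        rw [e]; exact hL1
      · have e : L - 2 + 3 = L + 1 := by ring
        rw [e]; exact hL2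
    calc M ω ^ p = (A (L-2)).indicator (fun ω => M ω ^ p) ω := by
          rw [Set.indicator_of_mem hmem]
      _ ≤ ∑' k : ℤ, (A k).indicator (fun ω => M ω ^ p) ω :=
          ENNReal.le_tsum (L-2)
      _ ≤ _ := le_add_self
  have hdecomp : ∫⁻ ω, M ω ^ p ∂ν ≤ ∑' k : ℤ, ∫⁻ ω in A k, M ω ^ p ∂ν := by
    calc ∫⁻ ω, M ω ^ p ∂ν
        ≤ ∫⁻ ω, (({ω | M ω = ⊤}.indicator (fun ω => M ω ^ p) ω)
            + ∑' k : ℤ, (A k).indicator (fun ω => M ω ^ p) ω) ∂ν := lintegral_mono hptws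
      _ = (∫⁻ ω, {ω | M ω = ⊤}.indicator (fun ω => M ω ^ p) ω ∂ν)
            + ∫⁻ ω, ∑' k : ℤ, (A k).indicator (fun ω => M ω ^ p) ω ∂ν :=
          lintegral_add_left ((hMm.pow_const p).indicator hSinf) _
      _ = 0 + ∑' k : ℤ, ∫⁻ ω in A k, M ω ^ p ∂ν := by
          congr 1
          · rw [lintegral_indicator hSinf, setLIntegral_measure_zero _ _ hinfty]
          · rw [lintegral_tsum fun k => ((hMm.pow_const p).indicator (hAm k)).aemeasurable]
            exact tsum_congr fun k => by rw [lintegral_indicator (hAm k)]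
      _ = ∑' k : ℤ, ∫⁻ ω in A k, M ω ^ p ∂ν := zero_add _
  -- estimate on each band
  have hband : ∀ k : ℤ, ∫⁻ ω in A k, M ω ^ p ∂ν
      ≤ ((2:ℝ≥0∞)^p)^(k+3) * (((2:ℝ≥0∞)^k)⁻¹ * ∫⁻ ω, tr k ω ∂ν) := by
    intro k
    have hAsub : A k ⊆ {ω | (2:ℝ≥0∞)^(k+1) < M ω} := by
      intro ω hω
      exact lt_of_lt_of_le (two_zpow_lt (by omega)) hω.1
    calc ∫⁻ ω in A k, M ω ^ p ∂ν ≤ ∫⁻ _ in A k, ((2:ℝ≥0∞)^(k+3))^p ∂ν := by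
          refine setLIntegral_mono' (hAm k) fun ω hω => ?_
          exact ENNReal.rpow_le_rpow hω.2.le hp0.le
      _ = ((2:ℝ≥0∞)^(k+3))^p * ν (A k) := setLIntegral_const _ _
      _ ≤ ((2:ℝ≥0∞)^(k+3))^p * ν {ω | (2:ℝ≥0∞)^(k+1) < M ω} :=
          mul_le_mul_right (measure_mono hAsub) _
      _ ≤ ((2:ℝ≥0∞)^(k+3))^p * (((2:ℝ≥0∞)^k)⁻¹ * ∫⁻ ω, tr k ω ∂ν) :=
          mul_le_mul_right (hweak k) _
      _ = ((2:ℝ≥0∞)^p)^(k+3) * (((2:ℝ≥0∞)^k)⁻¹ * ∫⁻ ω, tr k ω ∂ν) := by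
          rw [zpow_rpow_comm]
  -- summing the bands via Fubini for sums and the geometric series
  have hsum : ∑' k : ℤ, ∫⁻ ω in A k, M ω ^ p ∂ν ≤ K * D := by
    have hswap : ∑' k : ℤ, ((2:ℝ≥0∞)^p)^(k+3) * (((2:ℝ≥0∞)^k)⁻¹ * ∫⁻ ω, tr k ω ∂ν)
        = ∫⁻ ω, ∑' k : ℤ, ((2:ℝ≥0∞)^p)^(k+3) * ((2:ℝ≥0∞)^k)⁻¹ * tr k ω ∂ν := by
      rw [lintegral_tsum fun k => ((htrm k).const_mul _).aemeasurable]
      refine tsum_congr fun k => ?_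
      rw [lintegral_const_mul _ (htrm k), mul_assoc]
    have hpoint : ∀ ω, ∑' k : ℤ, ((2:ℝ≥0∞)^p)^(k+3) * ((2:ℝ≥0∞)^k)⁻¹ * tr k ω
        ≤ K * h ω ^ p := by
      intro ω
      rcases eq_or_ne (h ω) 0 with h0 | h0
      · have : ∀ k : ℤ, ((2:ℝ≥0∞)^p)^(k+3) * ((2:ℝ≥0∞)^k)⁻¹ * tr k ω = 0 := by
          intro k
          have : tr k ω = 0 := by
            rw [htr_def]; dsimp only; rw [if_neg]; rw [h0]; exact not_lt.mpr (zero_le)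
          rw [this, mul_zero]
        rw [tsum_congr this]; simp
      obtain ⟨L, hL1, hL2⟩ := ENNReal.exists_mem_Ico_zpow h0 (hhtop ω) ENNReal.one_lt_two h2top
      -- per-term bound
      have hterm : ∀ k : ℤ, ((2:ℝ≥0∞)^p)^(k+3) * ((2:ℝ≥0∞)^k)⁻¹ * tr k ω
          ≤ ((2:ℝ≥0∞)^p)^(3:ℤ) * h ω * (if k ≤ L then r^k else 0) := by
        intro k
        by_cases hc : (2:ℝ≥0∞)^k < h ω
        · have hkL : k ≤ L := by
            by_contra hcon
            push_neg at hcon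
            have : (2:ℝ≥0∞)^(L+1) ≤ 2^k := ENNReal.zpow_le_of_le one_le_two (by omega)
            exact absurd (lt_of_le_of_lt this (lt_of_lt_of_le hc hL2.le)) (lt_irrefl _)
          rw [if_pos hkL, htr_def]; dsimp only; rw [if_pos hc]
          have hck : ((2:ℝ≥0∞)^p)^(k+3) * ((2:ℝ≥0∞)^k)⁻¹ = ((2:ℝ≥0∞)^p)^(3:ℤ) * r^k := by
            -- convert everything to rpow of 2
            have e1 : ((2:ℝ≥0∞)^p)^(k+3) = ((2:ℝ≥0∞)^(((k+3:ℤ)):ℝ)) ^ p := by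
              rw [← zpow_rpow_comm, ENNReal.rpow_intCast]
            have e2 : ((2:ℝ≥0∞)^k)⁻¹ = ((2:ℝ≥0∞)^((k:ℤ):ℝ))⁻¹ := by
              rw [ENNReal.rpow_intCast]
            have e3 : ((2:ℝ≥0∞)^p)^(3:ℤ) = ((2:ℝ≥0∞)^(((3:ℤ)):ℝ)) ^ p := by
              rw [← zpow_rpow_comm, ENNReal.rpow_intCast]
            have e4 : r^(k:ℤ) = ((2:ℝ≥0∞)^((k:ℤ):ℝ)) ^ (p-1) := by
              rw [hr_def, ← zpow_rpow_comm, ENNReal.rpow_intCast]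
            rw [e1, e2, e3, e4, ← ENNReal.rpow_mul, ← ENNReal.rpow_mul, ← ENNReal.rpow_mul,
              ← ENNReal.rpow_neg, ← ENNReal.rpow_add _ _ h20 h2top,
              ← ENNReal.rpow_add _ _ h20 h2top]
            congr 1
            push_cast
            ring
          rw [hck]
          exact le_of_eq (by ring)
        · rw [htr_def]; dsimp only; rw [if_neg hc, mul_zero]
          exact zero_le
      calc ∑' k : ℤ, ((2:ℝ≥0∞)^p)^(k+3) * ((2:ℝ≥0∞)^k)⁻¹ * tr k ω
          ≤ ∑' k : ℤ, ((2:ℝ≥0∞)^p)^(3:ℤ) * h ω * (if k ≤ L then r^k else 0) :=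
            ENNReal.tsum_le_tsum hterm
        _ = ((2:ℝ≥0∞)^p)^(3:ℤ) * h ω * ∑' k : ℤ, (if k ≤ L then r^k else 0) :=
            ENNReal.tsum_mul_left
        _ ≤ ((2:ℝ≥0∞)^p)^(3:ℤ) * h ω * (r^L * (1 - r⁻¹)⁻¹) :=
            mul_le_mul_right (geom_tail_le hr0 hrtop L _ (fun j => le_refl _)) _
        _ ≤ ((2:ℝ≥0∞)^p)^(3:ℤ) * h ω * (h ω ^ (p-1) * (1 - r⁻¹)⁻¹) := by
            refine mul_le_mul_right (mul_le_mul_left ?_ _) _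
            rw [hr_def, ← zpow_rpow_comm]
            exact ENNReal.rpow_le_rpow hL1 hp1.le
        _ = K * (h ω * h ω ^ (p-1)) := by rw [hK_def]; ring
        _ = K * h ω ^ p := by
            congr 1
            nth_rewrite 1 [← ENNReal.rpow_one (h ω)]
            rw [← ENNReal.rpow_add _ _ h0 (hhtop ω)]
            norm_num
    calc ∑' k : ℤ, ∫⁻ ω in A k, M ω ^ p ∂ν
        ≤ ∑' k : ℤ, ((2:ℝ≥0∞)^p)^(k+3) * (((2:ℝ≥0∞)^k)⁻¹ * ∫⁻ ω, tr k ω ∂ν) :=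
          ENNReal.tsum_le_tsum hband
      _ = ∫⁻ ω, ∑' k : ℤ, ((2:ℝ≥0∞)^p)^(k+3) * ((2:ℝ≥0∞)^k)⁻¹ * tr k ω ∂ν := hswap
      _ ≤ ∫⁻ ω, K * h ω ^ p ∂ν := lintegral_mono hpoint
      _ = K * D := lintegral_const_mul K (hh.pow_const p)
  exact hdecomp.trans hsum
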